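/- One has t_{k-1} ≥ 0; that is, the second-to-last partition point is nonnegative. -/

import Mathlib

set_option maxHeartbeats 1000000

open Real MeasureTheory

theorem stmt_15 (k : ℕ) (hk : 2 ≤ k) (g : ℝ → ℝ)
    (hg0 : ∀ x ∈ Set.Icc (-1:ℝ) 1, 0 ≤ g x)
    (hgmono : MonotoneOn g (Set.Icc (-1:ℝ) 1))
    (hgconc : ConcaveOn ℝ (Set.Icc (-1:ℝ) 1) g)
    (hgconv : ConvexOn ℝ (Set.Ioo (-1:ℝ) 1) (fun s => g s / (1 + s)))
    (hnorm : (1 / π) * ∫ s in (-1:ℝ)..1, g s / Real.sqrt (1 - s ^ 2) = 1)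
    (t : ℕ → ℝ)
    (ht0 : t 0 = -1) (htk : t k = 1)
    (htmem : ∀ j ≤ k, t j ∈ Set.Icc (-1:ℝ) 1)
    (htmono : ∀ i j : ℕ, i < j → j ≤ k → t i < t j)
    (htW : ∀ j ≤ k,
      ((k : ℝ) / π) * ∫ s in (-1:ℝ)..(t j), g s / Real.sqrt (1 - s ^ 2) = (j : ℝ))
    :
    0 ≤ t (k - 1) := by
  by_contra hcon
  push_neg at hcon
  set a := t (k - 1) with ha
  set f : ℝ → ℝ := fun s => g s / Real.sqrt (1 - s ^ 2) with hfdef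
  have hπ : (0:ℝ) < π := Real.pi_pos
  have hamem : a ∈ Set.Icc (-1:ℝ) 1 := htmem (k-1) (by omega)
  have hage : (-1:ℝ) ≤ a := hamem.1
  -- total integral equals π
  have hItot : ∫ s in (-1:ℝ)..1, f s = π := by
    have h := hnorm
    field_simp at h
    linarith
  have hI : IntervalIntegrable f volume (-1) 1 := by
    by_contra h
    rw [intervalIntegral.integral_undef h] at hItot
    linarith
  have hsub : ∀ u v : ℝ, -1 ≤ u → u ≤ 1 → -1 ≤ v → v ≤ 1 →
      IntervalIntegrable f volume u v := by
    intro u v hu1 hu2 hv1 hv2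
    refine hI.mono_set (Set.uIcc_subset_uIcc ?_ ?_) <;>
      · rw [Set.uIcc_of_le (by norm_num : (-1:ℝ) ≤ 1)]
        constructor <;> assumption
  have hfpos : ∀ s ∈ Set.Icc (-1:ℝ) 1, 0 ≤ f s := fun s hs =>
    div_nonneg (hg0 s hs) (Real.sqrt_nonneg _)
  -- value of ∫_{-1}^a
  have hka : (1:ℝ) ≤ (k:ℝ) - 1 := by
    have : (2:ℝ) ≤ (k:ℝ) := by exact_mod_cast hk
    linarith
  have hIa : ∫ s in (-1:ℝ)..a, f s = π * ((k:ℝ) - 1) / k := by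
    have h := htW (k-1) (by omega)
    have hcast : ((k - 1 : ℕ) : ℝ) = (k:ℝ) - 1 := by
      have : 1 ≤ k := by omega
      push_cast [Nat.cast_sub this]
      ring
    rw [hcast] at h
    have hkpos : (0:ℝ) < k := by positivity
    field_simp at h
    rw [eq_div_iff (ne_of_gt hkpos)]
    linarith
  -- symmetry: ∫_{-1}^0 ≤ ∫_0^1
  have hsym : (∫ s in (-1:ℝ)..0, f s) ≤ ∫ s in (0:ℝ)..1, f s := by
    have hneg : (∫ s in (0:ℝ)..1, f (-s)) = ∫ s in (-1:ℝ)..0, f s := by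
      simpa using intervalIntegral.integral_comp_neg (a := (0:ℝ)) (b := 1) f
    rw [← hneg]
    have hnint : IntervalIntegrable (fun s => f (-s)) volume 0 1 := by
      have := ((IntervalIntegrable.iff_comp_neg (by simp)).mp (hsub (-1) 0 (by norm_num) (by norm_num) (by norm_num) (by norm_num)))
      simpa using this.symm
    refine intervalIntegral.integral_mono_on (by norm_num) hnint
      (hsub 0 1 (by norm_num) (by norm_num) (by norm_num) (by norm_num)) ?_
    intro s hs
    have hs0 : (0:ℝ) ≤ s := hs.1
    have hs1 : s ≤ 1 := hs.2
    have hsq : ((-s)^2 : ℝ) = s ^ 2 := by ring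
    simp only [hfdef, hsq]
    rcases eq_or_lt_of_le hs1 with h1 | h1
    · subst h1; simp
    · have hpos : 0 < Real.sqrt (1 - s ^ 2) := Real.sqrt_pos.mpr (by nlinarith)
      have hg' : g (-s) ≤ g s :=
        hgmono ⟨by linarith, by linarith⟩ ⟨by linarith, hs1⟩ (by linarith)
      exact div_le_div_of_nonneg_right hg' hpos.le |>.trans_eq rfl
  -- split total
  have hsplit : (∫ s in (-1:ℝ)..0, f s) + (∫ s in (0:ℝ)..1, f s) = π := by
    rw [intervalIntegral.integral_add_adjacent_intervals
      (hsub (-1) 0 (by norm_num) (by norm_num) (by norm_num) (by norm_num))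
      (hsub 0 1 (by norm_num) (by norm_num) (by norm_num) (by norm_num))]
    exact hItot
  have hhalf : (∫ s in (-1:ℝ)..0, f s) ≤ π / 2 := by linarith
  -- split [-1,0] at a
  have hsplit2 : (∫ s in (-1:ℝ)..a, f s) + (∫ s in a..(0:ℝ), f s) = ∫ s in (-1:ℝ)..0, f s :=
    intervalIntegral.integral_add_adjacent_intervals
      (hsub (-1) a (by norm_num) (by norm_num) hage (by linarith))
      (hsub a 0 hage (by linarith) (by norm_num) (by norm_num))
  have hIa0nonneg : 0 ≤ ∫ s in a..(0:ℝ), f s :=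
    intervalIntegral.integral_nonneg (by linarith) (fun u hu =>
      hfpos u ⟨by linarith [hu.1], by linarith [hu.2]⟩)
  have hge : π / 2 ≤ π * ((k:ℝ) - 1) / k := by
    rw [div_le_div_iff₀ (by norm_num) (by positivity)]
    nlinarith
  have hIa0 : (∫ s in a..(0:ℝ), f s) = 0 := by
    have : (∫ s in a..(0:ℝ), f s) ≤ 0 := by
      rw [hIa] at hsplit2
      linarith
    linarith
  -- g vanishes on (a, 0)
  have gzero : ∀ c ∈ Set.Ioo a (0:ℝ), g c = 0 := by
    intro c hc
    have hcmem : c ∈ Set.Icc (-1:ℝ) 1 := ⟨by linarith [hc.1], by linarith [hc.2]⟩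
    by_contra hgc
    have hgc' : 0 < g c := lt_of_le_of_ne (hg0 c hcmem) (Ne.symm hgc)
    have hlow : g c * (0 - c) ≤ ∫ s in c..(0:ℝ), f s := by
      have hmono : ∀ x ∈ Set.Icc c (0:ℝ), (fun _ : ℝ => g c) x ≤ f x := by
        intro x hx
        have hxmem : x ∈ Set.Icc (-1:ℝ) 1 := ⟨by linarith [hx.1, hc.1], by linarith [hx.2]⟩
        have hgx : g c ≤ g x := hgmono hcmem hxmem hx.1
        have hsq : x ^ 2 < 1 := by nlinarith [hx.1, hx.2, hc.1, hc.2, hage, hcon]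
        have hpos : 0 < Real.sqrt (1 - x ^ 2) := Real.sqrt_pos.mpr (by linarith)
        have hle1 : Real.sqrt (1 - x ^ 2) ≤ 1 := by
          have h1 := Real.sqrt_le_sqrt (show 1 - x ^ 2 ≤ 1 by nlinarith)
          simpa using h1
        have : g x ≤ g x / Real.sqrt (1 - x ^ 2) := by
          rw [le_div_iff₀ hpos]
          nlinarith [hg0 x hxmem]
        exact hgx.trans this
      have := intervalIntegral.integral_mono_on (le_of_lt hc.2)
        (intervalIntegrable_const)
        (hsub c 0 (by linarith [hc.1]) (by linarith [hc.2]) (by norm_num) (by norm_num)) hmono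
      simpa [mul_comm] using this
    have hac : 0 ≤ ∫ s in a..c, f s :=
      intervalIntegral.integral_nonneg (le_of_lt hc.1) (fun u hu =>
        hfpos u ⟨by linarith [hu.1], by linarith [hu.2, hc.2]⟩)
    have hspl : (∫ s in a..c, f s) + (∫ s in c..(0:ℝ), f s) = ∫ s in a..(0:ℝ), f s :=
      intervalIntegral.integral_add_adjacent_intervals
        (hsub a c hage (by linarith) (by linarith [hc.1]) (by linarith [hc.2]))
        (hsub c 0 (by linarith [hc.1]) (by linarith [hc.2]) (by norm_num) (by norm_num))
    have hposmul : 0 < g c * (0 - c) := mul_pos hgc' (by linarith [hc.2])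
    rw [hIa0] at hspl
    linarith
  -- hence g ≡ 0 on [-1, a], so ∫_{-1}^a f = 0
  have hga2 : g (a/2) = 0 := gzero (a/2) ⟨by linarith, by linarith⟩
  have hIazero : (∫ s in (-1:ℝ)..a, f s) = 0 := by
    rw [intervalIntegral.integral_congr (g := fun _ => (0:ℝ)) ?_]
    · simp
    · intro s hs
      rw [Set.uIcc_of_le hage] at hs
      have hsmem : s ∈ Set.Icc (-1:ℝ) 1 := ⟨hs.1, by linarith [hs.2]⟩
      have hgle : g s ≤ g (a/2) :=
        hgmono hsmem ⟨by linarith, by linarith⟩ (by linarith [hs.2])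
      have hgs : g s = 0 := le_antisymm (by linarith [hga2]) (hg0 s hsmem)
      simp [hfdef, hgs]
  rw [hIazero] at hIa
  have : π * ((k:ℝ) - 1) / k > 0 := by positivity
  linarith
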